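/- Let M be an imprimitivity Hilbert C*-bimodule over unital C*-algebras A and B with canonical isomorphism φ_M: A → B, and let I ⊆ A be a closed involutive ideal. Then IM = M·φ_M(I), and the quotient M/(IM) is an imprimitivity Hilbert C*-bimodule over A/I and B/φ_M(I). -/

import Mathlib

/-- A pre-Hilbert C*-bimodule `M` over unital C*-algebras `A` (on the left) and
`B` (on the right): a left pre-Hilbert C*-module over `A` (inner product `innerL`,
`A`-linear in the first variable) and a right pre-Hilbert C*-module over `B`
(inner product `innerR`, `B`-linear in the second variable), with compatible
actions. -/
structure PreHilbertBimodule (A B M : Type*) [CStarAlgebra A] [CStarAlgebra B]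
    [AddCommGroup M] [Module ℂ M] where
  lsmul : A → M → M
  rsmul : M → B → M
  innerL : M → M → A
  innerR : M → M → B
  lsmul_dist : ∀ a x y, lsmul a (x + y) = lsmul a x + lsmul a y
  add_lsmul : ∀ a b x, lsmul (a + b) x = lsmul a x + lsmul b x
  mul_lsmul : ∀ a b x, lsmul (a * b) x = lsmul a (lsmul b x)
  one_lsmul : ∀ x, lsmul 1 x = x
  lsmul_csmul : ∀ (c : ℂ) a x, lsmul a (c • x) = c • lsmul a x
  csmul_lsmul : ∀ (c : ℂ) a x, lsmul (c • a) x = c • lsmul a x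
  rsmul_dist : ∀ x y b, rsmul (x + y) b = rsmul x b + rsmul y b
  rsmul_add : ∀ x a b, rsmul x (a + b) = rsmul x a + rsmul x b
  rsmul_mul : ∀ x a b, rsmul (rsmul x a) b = rsmul x (a * b)
  rsmul_one : ∀ x, rsmul x 1 = x
  rsmul_csmul : ∀ (c : ℂ) x b, rsmul (c • x) b = c • rsmul x b
  rsmul_calg : ∀ (c : ℂ) x b, rsmul x (c • b) = c • rsmul x b
  lsmul_rsmul : ∀ a x b, lsmul a (rsmul x b) = rsmul (lsmul a x) b
  innerR_add_right : ∀ x y z, innerR x (y + z) = innerR x y + innerR x z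
  innerR_rsmul_right : ∀ x y b, innerR x (rsmul y b) = innerR x y * b
  innerR_conj_symm : ∀ x y, innerR y x = star (innerR x y)
  innerR_csmul_right : ∀ (c : ℂ) x y, innerR x (c • y) = c • innerR x y
  innerR_self_pos : ∀ x, ∃ b, innerR x x = star b * b
  innerR_self_definite : ∀ x, innerR x x = 0 → x = 0
  innerL_add_left : ∀ x y z, innerL (x + y) z = innerL x z + innerL y z
  innerL_lsmul_left : ∀ a x y, innerL (lsmul a x) y = a * innerL x y
  innerL_conj_symm : ∀ x y, innerL y x = star (innerL x y)
  innerL_csmul_left : ∀ (c : ℂ) x y, innerL (c • x) y = c • innerL x y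
  innerL_self_pos : ∀ x, ∃ a, innerL x x = star a * a
  innerL_self_definite : ∀ x, innerL x x = 0 → x = 0
  innerR_lsmul : ∀ a x y, innerR x (lsmul a y) = innerR (lsmul (star a) x) y
  innerL_rsmul : ∀ x y b, innerL (rsmul x b) y = innerL x (rsmul y (star b))

/-- An imprimitivity (equivalence) Hilbert C*-bimodule over `A` and `B`: a
pre-Hilbert C*-bimodule that is full as a left and as a right Hilbert C*-module,
satisfies the imprimitivity condition `⟨x,y⟩_A·z = x·⟨y,z⟩_B`, and is complete
(for the common norm induced by the inner products). -/
structure ImprimitivityBimodule (A B M : Type*) [CStarAlgebra A] [CStarAlgebra B]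
    [AddCommGroup M] [Module ℂ M] extends PreHilbertBimodule A B M where
  imprimitivity : ∀ x y z, lsmul (innerL x y) z = rsmul x (innerR y z)
  fullL : closure (Submodule.span ℂ {a : A | ∃ x y : M, a = innerL x y} : Set A)
      = Set.univ
  fullR : closure (Submodule.span ℂ {b : B | ∃ x y : M, b = innerR x y} : Set B)
      = Set.univ
  complete : ∀ f : ℕ → M,
    (∀ ε > 0, ∃ N, ∀ m ≥ N, ∀ n ≥ N,
      ‖innerR (f m - f n) (f m - f n)‖ < ε) →
    ∃ x, ∀ ε > 0, ∃ N, ∀ n ≥ N, ‖innerR (f n - x) (f n - x)‖ < ε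


namespace QIBAux

variable {A B M : Type*} [CommCStarAlgebra A] [CommCStarAlgebra B]
    [AddCommGroup M] [Module ℂ M]

section Basic
variable (H : ImprimitivityBimodule A B M)

lemma rsmul_zero (x : M) : H.rsmul x 0 = 0 := by
  have h := H.rsmul_add x 0 0
  rw [add_zero] at h
  exact (left_eq_add.mp h)

lemma zero_rsmul (b : B) : H.rsmul 0 b = 0 := by
  have h := H.rsmul_dist 0 0 b
  rw [add_zero] at h
  exact (left_eq_add.mp h)

lemma lsmul_zero (a : A) : H.lsmul a 0 = 0 := by
  have h := H.lsmul_dist a 0 0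
  rw [add_zero] at h
  exact (left_eq_add.mp h)

lemma zero_lsmul (x : M) : H.lsmul 0 x = 0 := by
  have h := H.add_lsmul 0 0 x
  rw [add_zero] at h
  exact (left_eq_add.mp h)

lemma rsmul_neg (x : M) (b : B) : H.rsmul x (-b) = -H.rsmul x b := by
  have h := H.rsmul_add x b (-b)
  rw [add_neg_cancel, rsmul_zero] at h
  linear_combination (norm := abel) -h

lemma neg_rsmul (x : M) (b : B) : H.rsmul (-x) b = -H.rsmul x b := by
  have h := H.rsmul_dist x (-x) b
  rw [add_neg_cancel, zero_rsmul] at h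
  linear_combination (norm := abel) -h

lemma rsmul_sub (x : M) (b b' : B) : H.rsmul x (b - b') = H.rsmul x b - H.rsmul x b' := by
  rw [sub_eq_add_neg, H.rsmul_add, rsmul_neg, sub_eq_add_neg]

lemma sub_rsmul (x x' : M) (b : B) : H.rsmul (x - x') b = H.rsmul x b - H.rsmul x' b := by
  rw [sub_eq_add_neg, H.rsmul_dist, neg_rsmul, sub_eq_add_neg]

lemma lsmul_neg (a : A) (x : M) : H.lsmul a (-x) = -H.lsmul a x := by
  have h := H.lsmul_dist a x (-x)
  rw [add_neg_cancel, lsmul_zero] at h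
  linear_combination (norm := abel) -h

lemma neg_lsmul (a : A) (x : M) : H.lsmul (-a) x = -H.lsmul a x := by
  have h := H.add_lsmul a (-a) x
  rw [add_neg_cancel, zero_lsmul] at h
  linear_combination (norm := abel) -h

lemma lsmul_sub (a : A) (x x' : M) : H.lsmul a (x - x') = H.lsmul a x - H.lsmul a x' := by
  rw [sub_eq_add_neg, H.lsmul_dist, lsmul_neg, sub_eq_add_neg]

lemma sub_lsmul (a a' : A) (x : M) : H.lsmul (a - a') x = H.lsmul a x - H.lsmul a' x := by
  rw [sub_eq_add_neg, H.add_lsmul, neg_lsmul, sub_eq_add_neg]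

lemma innerR_zero_right (x : M) : H.innerR x 0 = 0 := by
  have h := H.innerR_add_right x 0 0
  rw [add_zero] at h
  exact (left_eq_add.mp h)

lemma innerR_zero_left (y : M) : H.innerR 0 y = 0 := by
  rw [H.innerR_conj_symm, innerR_zero_right, star_zero]

lemma innerR_add_left (x y z : M) : H.innerR (x + y) z = H.innerR x z + H.innerR y z := by
  rw [H.innerR_conj_symm, H.innerR_add_right, star_add, ← H.innerR_conj_symm,
    ← H.innerR_conj_symm]

lemma innerR_neg_right (x y : M) : H.innerR x (-y) = -H.innerR x y := by
  have h := H.innerR_add_right x y (-y)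
  rw [add_neg_cancel, innerR_zero_right] at h
  linear_combination -h

lemma innerR_sub_right (x y z : M) : H.innerR x (y - z) = H.innerR x y - H.innerR x z := by
  rw [sub_eq_add_neg, H.innerR_add_right, innerR_neg_right, sub_eq_add_neg]

lemma innerR_sub_left (x y z : M) : H.innerR (x - y) z = H.innerR x z - H.innerR y z := by
  rw [H.innerR_conj_symm, innerR_sub_right, star_sub, ← H.innerR_conj_symm,
    ← H.innerR_conj_symm]

lemma innerR_rsmul_left (x y : M) (b : B) :
    H.innerR (H.rsmul x b) y = star b * H.innerR x y := by
  rw [H.innerR_conj_symm, H.innerR_rsmul_right, star_mul, ← H.innerR_conj_symm]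

lemma innerR_lsmul_left (a : A) (x y : M) :
    H.innerR (H.lsmul a x) y = H.innerR x (H.lsmul (star a) y) := by
  rw [H.innerR_conj_symm, H.innerR_lsmul, ← H.innerR_conj_symm]

lemma innerL_zero_left (y : M) : H.innerL 0 y = 0 := by
  have h := H.innerL_add_left 0 0 y
  rw [add_zero] at h
  exact (left_eq_add.mp h)

lemma innerL_zero_right (x : M) : H.innerL x 0 = 0 := by
  rw [H.innerL_conj_symm, innerL_zero_left, star_zero]

lemma innerL_add_right (x y z : M) : H.innerL x (y + z) = H.innerL x y + H.innerL x z := by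
  rw [H.innerL_conj_symm, H.innerL_add_left, star_add, ← H.innerL_conj_symm,
    ← H.innerL_conj_symm]

lemma innerL_neg_left (x y : M) : H.innerL (-x) y = -H.innerL x y := by
  have h := H.innerL_add_left x (-x) y
  rw [add_neg_cancel, innerL_zero_left] at h
  linear_combination -h

lemma innerL_sub_left (x y z : M) : H.innerL (x - y) z = H.innerL x z - H.innerL y z := by
  rw [sub_eq_add_neg, H.innerL_add_left, innerL_neg_left, sub_eq_add_neg]

lemma innerL_sub_right (x y z : M) : H.innerL x (y - z) = H.innerL x y - H.innerL x z := by
  rw [H.innerL_conj_symm, innerL_sub_left, star_sub, ← H.innerL_conj_symm,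
    ← H.innerL_conj_symm]

lemma innerL_lsmul_right (a : A) (x y : M) :
    H.innerL x (H.lsmul a y) = H.innerL x y * star a := by
  rw [H.innerL_conj_symm, H.innerL_lsmul_left, star_mul, ← H.innerL_conj_symm]

-- sums
lemma rsmul_sum {ι : Type*} (x : M) (s : Finset ι) (f : ι → B) :
    H.rsmul x (∑ j ∈ s, f j) = ∑ j ∈ s, H.rsmul x (f j) :=
  map_sum (AddMonoidHom.mk' (H.rsmul x) (H.rsmul_add x)) f s

lemma lsmul_sum {ι : Type*} (a : A) (s : Finset ι) (f : ι → M) :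
    H.lsmul a (∑ j ∈ s, f j) = ∑ j ∈ s, H.lsmul a (f j) :=
  map_sum (AddMonoidHom.mk' (H.lsmul a) (H.lsmul_dist a)) f s

lemma innerR_sum_right {ι : Type*} (x : M) (s : Finset ι) (f : ι → M) :
    H.innerR x (∑ j ∈ s, f j) = ∑ j ∈ s, H.innerR x (f j) :=
  map_sum (AddMonoidHom.mk' (H.innerR x) (H.innerR_add_right x)) f s

lemma sum_rsmul {ι : Type*} (b : B) (s : Finset ι) (f : ι → M) :
    H.rsmul (∑ j ∈ s, f j) b = ∑ j ∈ s, H.rsmul (f j) b :=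
  map_sum (AddMonoidHom.mk' (fun x => H.rsmul x b) (fun x y => H.rsmul_dist x y b)) f s

lemma innerL_sum_left {ι : Type*} (y : M) (s : Finset ι) (f : ι → M) :
    H.innerL (∑ j ∈ s, f j) y = ∑ j ∈ s, H.innerL (f j) y :=
  map_sum (AddMonoidHom.mk' (fun x => H.innerL x y) (fun u v => H.innerL_add_left u v y)) f s

end Basic

end QIBAux

namespace QIBAux

section Core
variable {A B M : Type*} [CommCStarAlgebra A] [CommCStarAlgebra B]
    [AddCommGroup M] [Module ℂ M]

lemma nilp {δ : B} (h : δ * δ = 0) : δ = 0 := by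
  have h1 : (star δ * δ) * (star δ * δ) = 0 := by
    have : (star δ * δ) * (star δ * δ) = (star δ * star δ) * (δ * δ) := by ring
    rw [this, ← star_mul, h, star_zero, zero_mul]
  have h2 : star (star δ * δ) = star δ * δ := by rw [star_mul, star_star]
  have h3 : ‖star δ * δ‖ = 0 := by
    have := CStarRing.norm_star_mul_self (x := star δ * δ)
    rw [h2, h1, norm_zero] at this
    nlinarith [norm_nonneg (star δ * δ)]
  have h4 : ‖δ‖ = 0 := by
    have := CStarRing.norm_star_mul_self (x := δ)
    rw [h3] at this
    nlinarith [norm_nonneg δ]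
  exact norm_eq_zero.mp h4

variable (H : ImprimitivityBimodule A B M)

lemma BB (v x y x' y' u : M) :
    H.innerR v x * (H.innerR y x' * H.innerR y' u)
      = H.innerR v x' * (H.innerR y' x * H.innerR y u) := by
  have e1 : ∀ p q p' q' m, H.lsmul (H.innerL p q) (H.lsmul (H.innerL p' q') m)
      = H.rsmul p (H.innerR q p' * H.innerR q' m) := by
    intro p q p' q' m
    rw [H.imprimitivity, H.imprimitivity, H.innerR_rsmul_right]
  have hC : H.rsmul x (H.innerR y x' * H.innerR y' u)
      = H.rsmul x' (H.innerR y' x * H.innerR y u) := by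
    rw [← e1, ← e1, ← H.mul_lsmul, ← H.mul_lsmul, mul_comm]
  have := congrArg (H.innerR v) hC
  rwa [H.innerR_rsmul_right, H.innerR_rsmul_right] at this

end Core

end QIBAux

namespace QIBAux

section Core2
variable {A B M : Type*} [CommCStarAlgebra A] [CommCStarAlgebra B]
    [AddCommGroup M] [Module ℂ M]
variable (H : ImprimitivityBimodule A B M)

lemma R1 {n : ℕ} (w z : Fin n → M) (hwz : (∑ j, H.innerR (w j) (z j)) = 1)
    (v x y u : M) :
    H.innerR v x * H.innerR y u
      = H.innerR y x * H.innerR v (∑ j, H.rsmul (z j) (H.innerR (w j) u)) := by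
  have hsum : ∑ j, H.innerR v x * (H.innerR (w j) (z j) * H.innerR y u)
      = ∑ j, H.innerR v (z j) * (H.innerR y x * H.innerR (w j) u) :=
    Finset.sum_congr rfl (fun j _ => BB H v x (w j) (z j) y u)
  have hl : ∑ j, H.innerR v x * (H.innerR (w j) (z j) * H.innerR y u)
      = H.innerR v x * H.innerR y u := by
    rw [← Finset.mul_sum, ← Finset.sum_mul, hwz, one_mul]
  have hr : ∑ j, H.innerR v (z j) * (H.innerR y x * H.innerR (w j) u)
      = H.innerR y x * H.innerR v (∑ j, H.rsmul (z j) (H.innerR (w j) u)) := by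
    rw [innerR_sum_right, Finset.mul_sum]
    exact Finset.sum_congr rfl fun j _ => by
      rw [H.innerR_rsmul_right, mul_left_comm]
  rw [← hl, hsum, hr]

lemma Tid {n : ℕ} (w z : Fin n → M) (hwz : (∑ j, H.innerR (w j) (z j)) = 1)
    (u : M) : (∑ j, H.rsmul (z j) (H.innerR (w j) u)) = u := by
  set Tu := ∑ j, H.rsmul (z j) (H.innerR (w j) u) with hTu
  have h0 : ∀ v x : M, H.innerR v x * H.innerR v (u - Tu) = 0 := by
    intro v x
    rw [innerR_sub_right, mul_sub, R1 H w z hwz v x v u, sub_self]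
  have h1 : ∀ v : M, H.innerR v (u - Tu) = 0 := fun v => nilp (h0 v (u - Tu))
  have h2 := H.innerR_self_definite _ (h1 (u - Tu))
  exact (sub_eq_zero.mp h2).symm

lemma ID {n : ℕ} (w z : Fin n → M) (hwz : (∑ j, H.innerR (w j) (z j)) = 1)
    (v x y u : M) : H.innerR v x * H.innerR y u = H.innerR y x * H.innerR v u := by
  have h := R1 H w z hwz v x y u
  rwa [Tid H w z hwz u] at h

lemma mswap {n : ℕ} (w z : Fin n → M) (hwz : (∑ j, H.innerR (w j) (z j)) = 1)
    (x u y : M) : H.rsmul y (H.innerR x u) = H.rsmul u (H.innerR x y) := by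
  set d := H.rsmul y (H.innerR x u) - H.rsmul u (H.innerR x y) with hd
  have hv : ∀ v : M, H.innerR v d = 0 := by
    intro v
    rw [hd, innerR_sub_right, H.innerR_rsmul_right, H.innerR_rsmul_right,
      ID H w z hwz v y x u]
    ring
  have h2 := H.innerR_self_definite d (hv d)
  exact sub_eq_zero.mp h2

lemma hwz' {n : ℕ} (w z : Fin n → M) (hwz : (∑ j, H.innerR (w j) (z j)) = 1) :
    (∑ j, H.innerR (z j) (w j)) = 1 := by
  have h := congrArg star hwz
  rw [star_one, star_sum] at h
  rw [← h]
  exact Finset.sum_congr rfl fun j _ => H.innerR_conj_symm (w j) (z j)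

lemma expand_right {n : ℕ} (w z : Fin n → M) (hwz : (∑ j, H.innerR (w j) (z j)) = 1)
    (c : B) : c = ∑ j, H.innerR (w j) (H.rsmul (z j) c) := by
  have : (∑ j, H.innerR (w j) (z j)) * c = ∑ j, H.innerR (w j) (H.rsmul (z j) c) := by
    rw [Finset.sum_mul]
    exact Finset.sum_congr rfl fun j _ => (H.innerR_rsmul_right (w j) (z j) c).symm
  rw [hwz, one_mul] at this
  exact this

lemma rinj {n : ℕ} (w z : Fin n → M) (hwz : (∑ j, H.innerR (w j) (z j)) = 1)
    {b b' : B} (h : ∀ j, H.rsmul (z j) b = H.rsmul (z j) b') : b = b' := by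
  rw [expand_right H w z hwz b, expand_right H w z hwz b']
  exact Finset.sum_congr rfl fun j _ => by rw [h j]

lemma decompose {n : ℕ} (w z : Fin n → M) (hwz : (∑ j, H.innerR (w j) (z j)) = 1)
    (x : M) : x = ∑ j, H.lsmul (H.innerL x (w j)) (z j) := by
  conv_lhs => rw [← H.rsmul_one x, ← hwz, rsmul_sum]
  exact Finset.sum_congr rfl fun j _ => (H.imprimitivity x (w j) (z j)).symm

lemma keyφ {n : ℕ} (w z : Fin n → M) (hwz : (∑ j, H.innerR (w j) (z j)) = 1)
    (φ : A → B) (hφ : ∀ a, φ a = ∑ j, H.innerR (w j) (H.lsmul a (z j)))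
    (a : A) (x : M) : H.lsmul a x = H.rsmul x (φ a) := by
  conv_lhs => rw [decompose H w z hwz x, lsmul_sum]
  rw [hφ, rsmul_sum]
  exact Finset.sum_congr rfl fun j _ => by
    rw [← H.mul_lsmul, mul_comm, H.mul_lsmul, H.imprimitivity]

end Core2

end QIBAux

namespace QIBAux

section Core3
variable {A B M : Type*} [CommCStarAlgebra A] [CommCStarAlgebra B]
    [AddCommGroup M] [Module ℂ M]
variable (H : ImprimitivityBimodule A B M)

lemma innerL_sum_right {ι : Type*} (x : M) (s : Finset ι) (f : ι → M) :
    H.innerL x (∑ j ∈ s, f j) = ∑ j ∈ s, H.innerL x (f j) :=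
  map_sum (AddMonoidHom.mk' (H.innerL x) (innerL_add_right H x)) f s

variable {n : ℕ} (w z : Fin n → M) (hwz : (∑ j, H.innerR (w j) (z j)) = 1)
  (φ : A → B) (hφ : ∀ a, φ a = ∑ j, H.innerR (w j) (H.lsmul a (z j)))

include hwz hφ in
lemma φmul (a a' : A) : φ (a * a') = φ a * φ a' := by
  apply rinj H w z hwz
  intro j
  rw [← keyφ H w z hwz φ hφ, H.mul_lsmul, keyφ H w z hwz φ hφ a',
    H.lsmul_rsmul, keyφ H w z hwz φ hφ a, H.rsmul_mul]

include hwz hφ in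
lemma φstar (a : A) : star (φ a) = φ (star a) := by
  rw [hφ a, star_sum]
  have h1 : ∀ j, star (H.innerR (w j) (H.lsmul a (z j)))
      = H.innerR (z j) (w j) * φ (star a) := by
    intro j
    rw [← H.innerR_conj_symm, innerR_lsmul_left, keyφ H w z hwz φ hφ,
      H.innerR_rsmul_right]
  rw [Finset.sum_congr rfl fun j _ => h1 j, ← Finset.sum_mul, hwz' H w z hwz, one_mul]

include hwz hφ in
lemma L4 (x y : M) : φ (H.innerL y x) = H.innerR x y := by
  apply rinj H w z hwz
  intro j
  rw [← keyφ H w z hwz φ hφ, H.imprimitivity, mswap H w z hwz]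

include hwz in
lemma eL : (∑ j, H.innerL (z j) (w j)) = 1 := by
  set e := ∑ j, H.innerL (z j) (w j) with he
  have gen : ∀ u v : M, H.innerL u v * e = H.innerL u v := by
    intro u v
    rw [he, Finset.mul_sum]
    have h1 : ∀ j, H.innerL u v * H.innerL (z j) (w j)
        = H.innerL u (H.rsmul (w j) (H.innerR (z j) v)) := by
      intro j
      rw [← H.innerL_lsmul_left, H.imprimitivity, H.innerL_rsmul, ← H.innerR_conj_symm]
    rw [Finset.sum_congr rfl fun j _ => h1 j, ← innerL_sum_right,
      Tid H z w (hwz' H w z hwz) v]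
  have hclosed : IsClosed {a : A | a * e = a} :=
    isClosed_eq (continuous_id.mul continuous_const) continuous_id
  have hspan : (Submodule.span ℂ {a : A | ∃ x y : M, a = H.innerL x y} : Set A)
      ⊆ {a : A | a * e = a} := by
    intro a ha
    induction ha using Submodule.span_induction with
    | mem a ha => obtain ⟨x, y, rfl⟩ := ha; exact gen x y
    | zero => simp
    | add a b _ _ ha hb => show (a + b) * e = a + b; rw [add_mul, ha, hb]
    | smul c a _ ha => show (c • a) * e = c • a; rw [smul_mul_assoc, ha]
  have hcl : closure (Submodule.span ℂ {a : A | ∃ x y : M, a = H.innerL x y} : Set A)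
      ⊆ {a : A | a * e = a} := closure_minimal hspan hclosed
  rw [H.fullL] at hcl
  have h1 : (1:A) * e = 1 := hcl (Set.mem_univ 1)
  rwa [one_mul] at h1

include hwz in
lemma a_expand (a : A) : a = ∑ j, H.innerL (H.lsmul a (z j)) (w j) := by
  have h := eL H w z hwz
  calc a = a * 1 := (mul_one a).symm
  _ = a * ∑ j, H.innerL (z j) (w j) := by rw [h]
  _ = ∑ j, a * H.innerL (z j) (w j) := Finset.mul_sum _ _ _
  _ = ∑ j, H.innerL (H.lsmul a (z j)) (w j) :=
      Finset.sum_congr rfl fun j _ => (H.innerL_lsmul_left a (z j) (w j)).symm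

include hwz in
lemma spanL_top : Submodule.span ℂ {a : A | ∃ x y : M, a = H.innerL x y} = ⊤ := by
  rw [eq_top_iff]
  intro a _
  rw [a_expand H w z hwz a]
  exact Submodule.sum_mem _ fun j _ => Submodule.subset_span ⟨_, _, rfl⟩

include hwz in
lemma spanR_top : Submodule.span ℂ {b : B | ∃ x y : M, b = H.innerR x y} = ⊤ := by
  rw [eq_top_iff]
  intro b _
  rw [expand_right H w z hwz b]
  exact Submodule.sum_mem _ fun j _ => Submodule.subset_span ⟨_, _, rfl⟩

include hwz hφ in
lemma φinj (a : A) (h : φ a = 0) : a = 0 := by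
  rw [a_expand H w z hwz a]
  have h1 : ∀ j, H.lsmul a (z j) = 0 := by
    intro j
    rw [keyφ H w z hwz φ hφ, h, rsmul_zero]
  rw [Finset.sum_congr rfl fun j _ => by rw [h1 j, innerL_zero_left]]
  simp

end Core3

end QIBAux

lemma mem_of_star_mul_self_mem {A : Type*} [CommCStarAlgebra A] (I : Submodule ℂ A)
    (hI_mul : ∀ a ∈ I, ∀ c : A, c * a ∈ I) (hI_closed : IsClosed (I : Set A))
    (c : A) (hc : star c * c ∈ I) : c ∈ I := by
  set b := star c * c with hb_def
  have hsa : IsSelfAdjoint b := IsSelfAdjoint.star_mul_self c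
  have hspec : ∀ t ∈ spectrum ℝ b, 0 ≤ t := spectrum_star_mul_self_nonneg
  have key : ∀ n : ℕ, ∃ d : A, c * d ∈ I ∧ ‖c * d - c‖ ≤ Real.sqrt ((1/(n+1)) / 4) := by
    intro n
    set ε : ℝ := 1/(n+1) with hε_def
    have hε : (0:ℝ) < ε := by positivity
    have hne : ∀ t ∈ spectrum ℝ b, t + ε ≠ 0 := fun t ht => by have := hspec t ht; positivity
    have hcont_inv : ContinuousOn (fun t : ℝ => (t + ε)⁻¹) (spectrum ℝ b) :=
      ((continuous_id.add continuous_const).continuousOn).inv₀ hne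
    set g : ℝ → ℝ := fun t => t * (t + ε)⁻¹ with hg_def
    set h : ℝ → ℝ := fun t => ε * (t + ε)⁻¹ with hh_def
    have hcont_g : ContinuousOn g (spectrum ℝ b) := continuousOn_id.mul hcont_inv
    have hcont_h : ContinuousOn h (spectrum ℝ b) := continuousOn_const.mul hcont_inv
    refine ⟨cfc g b, ?_, ?_⟩
    · have h1 : cfc g b = b * cfc (fun t : ℝ => (t + ε)⁻¹) b := by
        have := cfc_mul (fun t : ℝ => t) (fun t : ℝ => (t + ε)⁻¹) b continuousOn_id hcont_inv
        rw [cfc_id' ℝ b hsa] at this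
        exact this
      rw [h1, show c * (b * cfc (fun t : ℝ => (t + ε)⁻¹) b)
            = (c * cfc (fun t : ℝ => (t + ε)⁻¹) b) * b from by ring]
      exact hI_mul b hc _
    · have hsum : cfc g b + cfc h b = 1 := by
        rw [← cfc_add b g h hcont_g hcont_h]
        have h2 : cfc (fun t => g t + h t) b = cfc (fun _ : ℝ => (1:ℝ)) b := by
          apply cfc_congr
          intro t ht
          show t * (t + ε)⁻¹ + ε * (t + ε)⁻¹ = 1
          rw [← add_mul, mul_inv_cancel₀ (hne t ht)]
        rw [h2, cfc_const_one ℝ b]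
      have hD : c * cfc g b - c = -(c * cfc h b) := by
        have h3 : cfc g b = 1 - cfc h b := by rw [← hsum]; ring
        rw [h3]; ring
      rw [hD, norm_neg]
      set D := cfc h b with hD_def
      have hDsa : IsSelfAdjoint D := cfc_predicate h b
      have hnorm_sq : ‖c * D‖ * ‖c * D‖ = ‖b * (D * D)‖ := by
        rw [← CStarRing.norm_star_mul_self]
        congr 1
        rw [star_mul, hDsa.star_eq]
        ring_nf
        rw [hb_def]; ring
      have hbd : ‖b * (D * D)‖ ≤ ε / 4 := by
        have h4 : b * (D * D) = cfc (fun t => t * (h t * h t)) b := by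
          rw [cfc_mul (fun t : ℝ => t) (fun t => h t * h t) b (by fun_prop) (hcont_h.mul hcont_h), cfc_mul _ _ b hcont_h hcont_h,
            cfc_id' ℝ b hsa]
        rw [h4]
        apply norm_cfc_le (by positivity)
        intro t ht
        have ht0 := hspec t ht
        have htε := hne t ht
        have hpos : (0:ℝ) < t + ε := by positivity
        have hu : (t + ε) * (t + ε)⁻¹ = 1 := mul_inv_cancel₀ htε
        rw [Real.norm_eq_abs]
        have hinv : (0:ℝ) ≤ (t + ε)⁻¹ := inv_nonneg.mpr hpos.le
        rw [abs_of_nonneg (by positivity)]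
        show t * (ε * (t + ε)⁻¹ * (ε * (t + ε)⁻¹)) ≤ ε / 4
        have h3 : ε * (((t + ε) * (t + ε)⁻¹) ^ 2) = ε := by rw [hu]; ring
        nlinarith [h3, mul_nonneg hε.le (sq_nonneg ((t - ε) * (t + ε)⁻¹))]
      have h5 : ‖c * D‖ ^ 2 ≤ ε / 4 := by rw [pow_two, hnorm_sq]; exact hbd
      exact (Real.le_sqrt (norm_nonneg _) (by positivity)).mpr h5
  choose d hd1 hd2 using key
  have htend : Filter.Tendsto (fun n => c * d n) Filter.atTop (nhds c) := by
    rw [tendsto_iff_norm_sub_tendsto_zero]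
    apply squeeze_zero (fun n => norm_nonneg _) hd2
    have : Filter.Tendsto (fun n : ℕ => (1/(n+1) : ℝ) / 4) Filter.atTop (nhds 0) := by
      have h0 := tendsto_one_div_add_atTop_nhds_zero_nat (𝕜 := ℝ)
      simpa using h0.div_const 4
    simpa using this.sqrt
  exact hI_closed.mem_of_tendsto htend (Filter.Eventually.of_forall hd1)

open QIBAux

/-- Let `M` be an imprimitivity Hilbert C*-bimodule over commutative unital
C*-algebras `A` and `B`, with canonical isomorphism `φ_M`, and let `I ⊆ A` be a
closed involutive ideal.  Then `IM = M·φ_M(I)`, and the quotient `M/(IM)` is an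
imprimitivity Hilbert C*-bimodule over `A/I` and `B/φ_M(I)`: expressed on
representatives, the two actions and the two inner products are well defined on the
quotients, the quotient inner products are definite, and the quotient bimodule is
full on both sides. -/
theorem quotient_imprimitivity_bimodule
    {A B M : Type*} [CommCStarAlgebra A] [CommCStarAlgebra B]
    [AddCommGroup M] [Module ℂ M]
    (H : ImprimitivityBimodule A B M)
    {n : ℕ} (w z : Fin n → M)
    (hwz : (∑ j, H.innerR (w j) (z j)) = 1)
    (φ : A → B) (hφ : ∀ a, φ a = ∑ j, H.innerR (w j) (H.lsmul a (z j)))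
    (I : Submodule ℂ A)
    (hI_mul : ∀ a ∈ I, ∀ c : A, c * a ∈ I)
    (hI_star : ∀ a ∈ I, star a ∈ I)
    (hI_closed : IsClosed (I : Set A))
    (IM : Submodule ℂ M)
    (hIM : IM = Submodule.span ℂ {m : M | ∃ a ∈ I, ∃ x : M, m = H.lsmul a x})
    (φI : Submodule ℂ B)
    (hφI : φI = Submodule.span ℂ {b : B | ∃ a ∈ I, b = φ a}) :
    -- `IM = M·φ_M(I)`
    IM = Submodule.span ℂ {m : M | ∃ x : M, ∃ a ∈ I, m = H.rsmul x (φ a)} ∧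
    -- the left action of `A/I` is well defined on `M/(IM)`
    (∀ (a a' : A) (x x' : M), a - a' ∈ I → x - x' ∈ IM →
      H.lsmul a x - H.lsmul a' x' ∈ IM) ∧
    -- the right action of `B/φ_M(I)` is well defined on `M/(IM)`
    (∀ (x x' : M) (b b' : B), x - x' ∈ IM → b - b' ∈ φI →
      H.rsmul x b - H.rsmul x' b' ∈ IM) ∧
    -- the `A/I`-valued inner product is well defined on `M/(IM)`
    (∀ x x' y y' : M, x - x' ∈ IM → y - y' ∈ IM →
      H.innerL x y - H.innerL x' y' ∈ I) ∧
    -- the `B/φ_M(I)`-valued inner product is well defined on `M/(IM)`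
    (∀ x x' y y' : M, x - x' ∈ IM → y - y' ∈ IM →
      H.innerR x y - H.innerR x' y' ∈ φI) ∧
    -- definiteness of the quotient inner products
    (∀ x : M, H.innerL x x ∈ I → x ∈ IM) ∧
    (∀ x : M, H.innerR x x ∈ φI → x ∈ IM) ∧
    -- fullness of the quotient bimodule on both sides
    Submodule.span ℂ {a : A | ∃ x y : M, a = H.innerL x y} ⊔ I = ⊤ ∧
    Submodule.span ℂ {b : B | ∃ x y : M, b = H.innerR x y} ⊔ φI = ⊤ := by
  
  have kφ := keyφ H w z hwz φ hφ
  -- generators of IM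
  have h_gen : ∀ a ∈ I, ∀ x : M, H.lsmul a x ∈ IM := fun a ha x =>
    hIM ▸ Submodule.subset_span ⟨a, ha, x, rfl⟩
  have h_genφ : ∀ a ∈ I, φ a ∈ φI := fun a ha =>
    hφI ▸ Submodule.subset_span ⟨a, ha, rfl⟩
  -- IM is stable under the module operations
  have h_lsmul_mem : ∀ (a : A) (m : M), m ∈ IM → H.lsmul a m ∈ IM := by
    intro a m hm
    rw [hIM] at hm ⊢
    induction hm using Submodule.span_induction with
    | mem m hm =>
      obtain ⟨b, hb, x, rfl⟩ := hm
      rw [← H.mul_lsmul]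
      exact Submodule.subset_span ⟨a * b, hI_mul b hb a, x, rfl⟩
    | zero => rw [lsmul_zero]; exact Submodule.zero_mem _
    | add u v _ _ hu hv => rw [H.lsmul_dist]; exact Submodule.add_mem _ hu hv
    | smul c u _ hu => rw [H.lsmul_csmul]; exact Submodule.smul_mem _ c hu
  have h_rsmulB_mem : ∀ (b : B) (m : M), m ∈ IM → H.rsmul m b ∈ IM := by
    intro b m hm
    rw [hIM] at hm ⊢
    induction hm using Submodule.span_induction with
    | mem m hm =>
      obtain ⟨a, ha, x, rfl⟩ := hm
      rw [← H.lsmul_rsmul]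
      exact Submodule.subset_span ⟨a, ha, H.rsmul x b, rfl⟩
    | zero => rw [zero_rsmul]; exact Submodule.zero_mem _
    | add u v _ _ hu hv => rw [H.rsmul_dist]; exact Submodule.add_mem _ hu hv
    | smul c u _ hu => rw [H.rsmul_csmul]; exact Submodule.smul_mem _ c hu
  have h_rsmulφI_mem : ∀ (x : M) (q : B), q ∈ φI → H.rsmul x q ∈ IM := by
    intro x q hq
    rw [hφI] at hq
    induction hq using Submodule.span_induction with
    | mem q hq =>
      obtain ⟨a, ha, rfl⟩ := hq
      rw [← kφ a x]
      exact h_gen a ha x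
    | zero => rw [rsmul_zero]; exact Submodule.zero_mem _
    | add u v _ _ hu hv => rw [H.rsmul_add]; exact Submodule.add_mem _ hu hv
    | smul c u _ hu => rw [H.rsmul_calg]; exact Submodule.smul_mem _ c hu
  -- inner products of IM elements
  have h_innerL_left : ∀ (m : M), m ∈ IM → ∀ y : M, H.innerL m y ∈ I := by
    intro m hm
    rw [hIM] at hm
    induction hm using Submodule.span_induction with
    | mem m hm =>
      intro y
      obtain ⟨a, ha, x, rfl⟩ := hm
      rw [H.innerL_lsmul_left, mul_comm]
      exact hI_mul a ha _
    | zero => intro y; rw [innerL_zero_left]; exact Submodule.zero_mem _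
    | add u v _ _ hu hv => intro y; rw [H.innerL_add_left]
                           exact Submodule.add_mem _ (hu y) (hv y)
    | smul c u _ hu => intro y; rw [H.innerL_csmul_left]
                       exact Submodule.smul_mem _ c (hu y)
  have h_innerL_right : ∀ (x m : M), m ∈ IM → H.innerL x m ∈ I := by
    intro x m hm
    rw [H.innerL_conj_symm]
    exact hI_star _ (h_innerL_left m hm x)
  -- the multiplier property of φI
  have hbφ : ∀ (b : B) (a : A), a ∈ I → b * φ a ∈ φI := by
    intro b a ha
    have hb : b ∈ Submodule.span ℂ {b : B | ∃ x y : M, b = H.innerR x y} := by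
      rw [spanR_top H w z hwz]; trivial
    induction hb using Submodule.span_induction with
    | mem b hb =>
      obtain ⟨x, y, rfl⟩ := hb
      have : H.innerR x y * φ a = φ (H.innerL y x * a) := by
        rw [φmul H w z hwz φ hφ, L4 H w z hwz φ hφ]
      rw [this]
      exact h_genφ _ (hI_mul a ha _)
    | zero => rw [zero_mul]; exact Submodule.zero_mem _
    | add u v _ _ hu hv => rw [add_mul]; exact Submodule.add_mem _ hu hv
    | smul c u _ hu => rw [smul_mul_assoc]; exact Submodule.smul_mem _ c hu
  have hφI_star : ∀ q ∈ φI, star q ∈ φI := by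
    intro q hq
    rw [hφI] at hq
    induction hq using Submodule.span_induction with
    | mem q hq =>
      obtain ⟨a, ha, rfl⟩ := hq
      rw [φstar H w z hwz φ hφ]
      exact h_genφ _ (hI_star a ha)
    | zero => rw [star_zero]; exact Submodule.zero_mem _
    | add u v _ _ hu hv => rw [star_add]; exact Submodule.add_mem _ hu hv
    | smul c u _ hu => rw [star_smul]; exact Submodule.smul_mem _ _ hu
  have h_innerR_right : ∀ (x m : M), m ∈ IM → H.innerR x m ∈ φI := by
    intro x m hm
    rw [hIM] at hm
    induction hm using Submodule.span_induction with
    | mem m hm =>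
      obtain ⟨a, ha, u, rfl⟩ := hm
      rw [kφ a u, H.innerR_rsmul_right]
      exact hbφ _ a ha
    | zero => rw [innerR_zero_right]; exact Submodule.zero_mem _
    | add u v _ _ hu hv => rw [H.innerR_add_right]; exact Submodule.add_mem _ hu hv
    | smul c u _ hu => rw [H.innerR_csmul_right]; exact Submodule.smul_mem _ c hu
  have h_innerR_left : ∀ (m : M), m ∈ IM → ∀ y : M, H.innerR m y ∈ φI := by
    intro m hm y
    rw [H.innerR_conj_symm]
    exact hφI_star _ (h_innerR_right y m hm)
  -- definiteness (left)
  have hC6a : ∀ x : M, H.innerL x x ∈ I → x ∈ IM := by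
    intro x hx
    have hcoef : ∀ j, H.innerL x (w j) ∈ I := by
      intro j
      apply mem_of_star_mul_self_mem I hI_mul hI_closed
      have hstar : star (H.innerL x (w j)) = H.innerL (w j) x :=
        (H.innerL_conj_symm x (w j)).symm
      rw [hstar, mul_comm]
      have hkey : H.innerL x (w j) * H.innerL (w j) x
          = H.innerL x x * H.innerL (w j) (w j) := by
        rw [← H.innerL_lsmul_left, H.imprimitivity, H.innerL_rsmul,
          ← H.innerR_conj_symm, mswap H w z hwz, ← H.imprimitivity,
          innerL_lsmul_right, ← H.innerL_conj_symm]
      rw [hkey, mul_comm]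
      exact hI_mul _ hx _
    have hsum : (∑ j, H.lsmul (H.innerL x (w j)) (z j)) ∈ IM :=
      Submodule.sum_mem _ fun j _ => h_gen _ (hcoef j) (z j)
    rwa [← decompose H w z hwz x] at hsum
  -- φ as a linear map, and φI = φ(I)
  let φL : A →ₗ[ℂ] B :=
    { toFun := φ
      map_add' := by
        intro a a'
        show φ (a + a') = φ a + φ a'
        rw [hφ, hφ, hφ, ← Finset.sum_add_distrib]
        exact Finset.sum_congr rfl fun j _ => by
          rw [H.add_lsmul, H.innerR_add_right]
      map_smul' := by
        intro c a
        show φ (c • a) = c • φ a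
        rw [hφ, hφ, Finset.smul_sum]
        exact Finset.sum_congr rfl fun j _ => by
          rw [H.csmul_lsmul, H.innerR_csmul_right] }
  have hφI_map : φI = Submodule.map φL I := by
    rw [hφI]
    apply le_antisymm
    · rw [Submodule.span_le]
      rintro b ⟨a, ha, rfl⟩
      exact ⟨a, ha, rfl⟩
    · rintro b ⟨a, ha, rfl⟩
      exact Submodule.subset_span ⟨a, ha, rfl⟩
  refine ⟨?_, ?_, ?_, ?_, ?_, hC6a, ?_, ?_, ?_⟩
  · -- IM = M·φ(I)
    rw [hIM]
    congr 1
    ext m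
    constructor
    · rintro ⟨a, ha, x, rfl⟩
      exact ⟨x, a, ha, kφ a x⟩
    · rintro ⟨x, a, ha, rfl⟩
      exact ⟨a, ha, x, (kφ a x).symm⟩
  · -- left action well defined
    intro a a' x x' ha hx
    have hdec : H.lsmul a x - H.lsmul a' x'
        = H.lsmul (a - a') x + H.lsmul a' (x - x') := by
      rw [sub_lsmul, lsmul_sub]; abel
    rw [hdec]
    exact Submodule.add_mem _ (h_gen _ ha x) (h_lsmul_mem a' _ hx)
  · -- right action well defined
    intro x x' b b' hx hb
    have hdec : H.rsmul x b - H.rsmul x' b'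
        = H.rsmul (x - x') b + H.rsmul x' (b - b') := by
      rw [sub_rsmul, rsmul_sub]; abel
    rw [hdec]
    exact Submodule.add_mem _ (h_rsmulB_mem b _ hx) (h_rsmulφI_mem x' _ hb)
  · -- innerL well defined
    intro x x' y y' hx hy
    have hdec : H.innerL x y - H.innerL x' y'
        = H.innerL (x - x') y + H.innerL x' (y - y') := by
      rw [innerL_sub_left, innerL_sub_right]; abel
    rw [hdec]
    exact Submodule.add_mem _ (h_innerL_left _ hx y) (h_innerL_right x' _ hy)
  · -- innerR well defined
    intro x x' y y' hx hy
    have hdec : H.innerR x y - H.innerR x' y'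
        = H.innerR (x - x') y + H.innerR x' (y - y') := by
      rw [innerR_sub_left, innerR_sub_right]; abel
    rw [hdec]
    exact Submodule.add_mem _ (h_innerR_left _ hx y) (h_innerR_right x' _ hy)
  · -- definiteness (right)
    intro x hx
    apply hC6a
    have h1 : φ (H.innerL x x) ∈ Submodule.map φL I := by
      rw [← hφI_map, L4 H w z hwz φ hφ x x]
      exact hx
    obtain ⟨a, ha, haeq⟩ := h1
    have haeq' : φ a = φ (H.innerL x x) := haeq
    have hsub : φ (a - H.innerL x x) = 0 := by
      have hms : φ (a - H.innerL x x) = φ a - φ (H.innerL x x) := map_sub φL a _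
      rw [hms, haeq', sub_self]
    have h0 := φinj H w z hwz φ hφ _ hsub
    have heq : H.innerL x x = a := (sub_eq_zero.mp h0).symm
    rw [heq]; exact ha
  · rw [spanL_top H w z hwz]
    exact top_sup_eq _
  · rw [spanR_top H w z hwz]
    exact top_sup_eq _
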